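/- Let M_A be a Markov basis for A such that π₁(m) ∈ {−1, 0, +1} for every m ∈ M_A. Then for every t ∈ ℤ₊^r, the set π₁(A⁻¹[t]) of first coordinates of tables in A⁻¹[t] is an interval of integers. -/

import Mathlib

open Matrix MvPolynomial

namespace SIS

variable {r d : ℕ}

/-- The integer matrix obtained from a nonnegative-integer matrix. -/
def intMat (A : Matrix (Fin r) (Fin d) ℕ) : Matrix (Fin r) (Fin d) ℤ :=
  fun i j => (A i j : ℤ)

/-- The rational matrix obtained from a nonnegative-integer matrix. -/
def ratMat (A : Matrix (Fin r) (Fin d) ℕ) : Matrix (Fin r) (Fin d) ℚ :=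
  fun i j => (A i j : ℚ)

def natToInt (v : Fin d → ℕ) : Fin d → ℤ := fun i => (v i : ℤ)

/-- `A⁻¹[t]`: nonnegative integer tables with constraint value `t`. -/
def tables (A : Matrix (Fin r) (Fin d) ℕ) (t : Fin r → ℕ) : Set (Fin d → ℕ) :=
  {n | A.mulVec n = t}

/-- `A_ℚ⁻¹[t]`: nonnegative rational points with constraint value `t`. -/
def ratTables (A : Matrix (Fin r) (Fin d) ℕ) (t : Fin r → ℕ) : Set (Fin d → ℚ) :=
  {q | (∀ i, 0 ≤ q i) ∧ (ratMat A).mulVec q = fun i => (t i : ℚ)}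

/-- ker_ℤ(A). -/
def kerZ (A : Matrix (Fin r) (Fin d) ℕ) : Set (Fin d → ℤ) :=
  {m | (intMat A).mulVec m = 0}

/-- The some nonempty subset of the rows of `A` sums to a strictly positive vector. -/
def RowsPos (A : Matrix (Fin r) (Fin d) ℕ) : Prop :=
  ∃ R : Finset (Fin r), R.Nonempty ∧ ∀ j, 0 < ∑ i ∈ R, A i j

/-- `u` and `v` are connected using moves from `M`, staying componentwise nonnegative. -/
def connects (M : Set (Fin d → ℤ)) (u v : Fin d → ℕ) : Prop :=
  ∃ l : List (Fin d → ℤ), (∀ m ∈ l, m ∈ M) ∧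
    natToInt u = natToInt v + l.sum ∧
    ∀ k, k ≤ l.length → ∀ i, 0 ≤ natToInt v i + (l.take k).sum i

/-- A Markov basis for `A`. -/
def IsMarkovBasis (A : Matrix (Fin r) (Fin d) ℕ) (M : Set (Fin d → ℤ)) : Prop :=
  M.Finite ∧ M ⊆ kerZ A ∧
    ∀ u v : Fin d → ℕ, A.mulVec u = A.mulVec v → connects M u v

/-- A Markov subbasis for `A` and the fixed value `t`. -/
def IsMarkovSubbasis (A : Matrix (Fin r) (Fin d) ℕ) (t : Fin r → ℕ)
    (M : Set (Fin d → ℤ)) : Prop :=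
  M.Finite ∧ M ⊆ kerZ A ∧ ∀ u ∈ tables A t, ∀ v ∈ tables A t, connects M u v

/-- A set of (nonnegative) integers is an interval of integers. -/
def IsIntInterval (S : Set ℕ) : Prop :=
  ∀ a ∈ S, ∀ b ∈ S, ∀ c : ℕ, a ≤ c → c ≤ b → c ∈ S

/-- The set of feasible values of cell `i` given that cells `j < i` are fixed to `w j`;
this is the set `π₁(A_{i}⁻¹[t - Σ_{j<i} w_j a_j])` of the paper. -/
def stepSet (A : Matrix (Fin r) (Fin d) ℕ) (t : Fin r → ℕ) (i : Fin d)
    (w : Fin d → ℕ) : Set ℕ :=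
  {c | ∃ n ∈ tables A t, (∀ j, j < i → n j = w j) ∧ n i = c}

/-- The sequential interval property for `A⁻¹[t]`. -/
def SeqIntervalProperty (A : Matrix (Fin r) (Fin d) ℕ) (t : Fin r → ℕ) : Prop :=
  ∀ i : Fin d, ∀ w : Fin d → ℕ, IsIntInterval (stepSet A t i w)

/-- m⁺. -/
def posPart (m : Fin d → ℤ) : Fin d → ℕ := fun i => (m i).toNat

/-- m⁻. -/
def negPart (m : Fin d → ℤ) : Fin d → ℕ := fun i => (-(m i)).toNat

/-- The monomial `x^ν`. -/
noncomputable def monom (ν : Fin d → ℕ) : MvPolynomial (Fin d) ℚ :=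
  MvPolynomial.monomial (Finsupp.equivFunOnFinite.symm ν) 1

/-- The binomial `x^{m⁺} - x^{m⁻}` of a Markov move `m`. -/
noncomputable def moveBinomial (m : Fin d → ℤ) : MvPolynomial (Fin d) ℚ :=
  monom (posPart m) - monom (negPart m)

/-- The toric ideal `I_A`. -/
noncomputable def toricIdeal (A : Matrix (Fin r) (Fin d) ℕ) : Ideal (MvPolynomial (Fin d) ℚ) :=
  Ideal.span {f | ∃ u v : Fin d → ℕ, A.mulVec u = A.mulVec v ∧ f = monom u - monom v}

/-- Lexicographic order on exponent vectors with `x₁ > x₂ > ⋯ > x_d`: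
`μ <lex ν` iff the first nonzero entry of `ν - μ` is positive. -/
def lexLt (μ ν : Fin d →₀ ℕ) : Prop :=
  ∃ i : Fin d, μ i < ν i ∧ ∀ j, j < i → μ j = ν j

/-- `ν` is the lex-leading exponent of `p`. -/
def IsLexLead (p : MvPolynomial (Fin d) ℚ) (ν : Fin d →₀ ℕ) : Prop :=
  ν ∈ p.support ∧ ∀ μ ∈ p.support, μ ≠ ν → lexLt μ ν

/-- `x^νg` divides `x^νf`. -/
def expDivides (νg νf : Fin d →₀ ℕ) : Prop := ∀ i, νg i ≤ νf i

/-- `G` is a lex Gröbner basis for `I` (ordering `x₁ > x₂ > ⋯ > x_d`). -/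
def IsLexGB (G : Set (MvPolynomial (Fin d) ℚ)) (I : Ideal (MvPolynomial (Fin d) ℚ)) : Prop :=
  G.Finite ∧ (∀ g ∈ G, g ≠ 0 ∧ g ∈ I) ∧
    ∀ f ∈ I, f ≠ 0 → ∃ g ∈ G, ∃ νg νf,
      IsLexLead g νg ∧ IsLexLead f νf ∧ expDivides νg νf

/-- Graded reverse lexicographic order with `x_d > x_{d-1} > ⋯ > x₁`:
`μ <grevlex ν` iff deg μ < deg ν, or degrees agree and the first nonzero entry of
`ν - μ` (scanning coordinates `1, 2, …, d`) is negative. -/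
def grevlexLt (μ ν : Fin d →₀ ℕ) : Prop :=
  (∑ i, μ i) < (∑ i, ν i) ∨
    ((∑ i, μ i) = (∑ i, ν i) ∧ ∃ i : Fin d, ν i < μ i ∧ ∀ j, j < i → μ j = ν j)

/-- `ν` is the grevlex-leading exponent of `p`. -/
def IsGrevlexLead (p : MvPolynomial (Fin d) ℚ) (ν : Fin d →₀ ℕ) : Prop :=
  ν ∈ p.support ∧ ∀ μ ∈ p.support, μ ≠ ν → grevlexLt μ ν

/-- `G` is a grevlex Gröbner basis for `I` (ordering `x_d > ⋯ > x₁`). -/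
def IsGrevlexGB (G : Set (MvPolynomial (Fin d) ℚ)) (I : Ideal (MvPolynomial (Fin d) ℚ)) : Prop :=
  G.Finite ∧ (∀ g ∈ G, g ≠ 0 ∧ g ∈ I) ∧
    ∀ f ∈ I, f ≠ 0 → ∃ g ∈ G, ∃ νg νf,
      IsGrevlexLead g νg ∧ IsGrevlexLead f νf ∧ expDivides νg νf

/-- `p` is square-free in `x_i`. -/
def SquareFreeIn (p : MvPolynomial (Fin d) ℚ) (i : Fin d) : Prop :=
  ∀ ν ∈ p.support, ν i ≤ 1

/-- `p` lies in `ℚ[x_i, …, x_d]`. -/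
def OnlyVarsFrom (p : MvPolynomial (Fin d) ℚ) (i : Fin d) : Prop :=
  ∀ ν ∈ p.support, ∀ j, j < i → ν j = 0

/-- The toric ideal `I_{A_j}` of the submatrix of the last columns, viewed inside
`ℚ[x₁, …, x_d]`. -/
noncomputable def toricIdealFrom (A : Matrix (Fin r) (Fin d) ℕ) (j : Fin d) :
    Ideal (MvPolynomial (Fin d) ℚ) :=
  Ideal.span {f | ∃ u v : Fin d → ℕ, (∀ k, k < j → u k = 0) ∧ (∀ k, k < j → v k = 0) ∧
    A.mulVec u = A.mulVec v ∧ f = monom u - monom v}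


/-- Lemma 3.1. If a Markov basis `M_A` for `A` satisfies
`π₁(M_A) ⊆ {-1, 0, +1}`, then for every `t` the set `π₁(A⁻¹[t])` is an
interval of integers. -/
theorem firstCoords_interval_of_markovBasis {r d : ℕ} [NeZero d]
    (A : Matrix (Fin r) (Fin d) ℕ) (hA : RowsPos A)
    (M : Set (Fin d → ℤ)) (hM : IsMarkovBasis A M)
    (hpi : ∀ m ∈ M, m 0 = -1 ∨ m 0 = 0 ∨ m 0 = 1)
    (t : Fin r → ℕ) :
    IsIntInterval {c : ℕ | ∃ n ∈ tables A t, n 0 = c} := by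
  intro a ha b hb c hac hcb
  obtain ⟨u, hu, hu0⟩ := ha
  obtain ⟨v, hv, hv0⟩ := hb
  obtain ⟨hMfin, hker, hconn⟩ := hM
  have huv : A.mulVec u = A.mulVec v := by rw [hu, hv]
  obtain ⟨l, hlM, hsum, hnn⟩ := hconn u v huv
  set N := l.length with hN
  set f : ℕ → Fin d → ℤ := fun k => natToInt v + (l.take k).sum with hf
  have hf0 : f 0 = natToInt v := by simp [hf]
  have hfN : f N = natToInt u := by
    simp only [hf, hN, List.take_length]
    rw [hsum]
  have hnonneg : ∀ k, k ≤ N → ∀ i, 0 ≤ f k i := by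
    intro k hk i
    exact hnn k hk i
  -- each step changes from f k by an element of M (or stays)
  have hstep : ∀ k, (hk : k < N) → f (k + 1) = f k + l.get ⟨k, hN ▸ hk⟩ := by
    intro k hk
    have : (l.take (k + 1)).sum = (l.take k).sum + l.get ⟨k, hN ▸ hk⟩ :=
      List.sum_take_succ l k (hN ▸ hk)
    simp only [hf]
    rw [this]
    abel
  have hstep0 : ∀ k, k < N → f (k + 1) 0 = f k 0 ∨ f (k + 1) 0 = f k 0 + 1 ∨
      f (k + 1) 0 = f k 0 - 1 := by
    intro k hk
    have hm : l.get ⟨k, hN ▸ hk⟩ ∈ M :=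
      hlM _ (l.get_mem _)
    have h0 := hpi _ hm
    have heq := hstep k hk
    have : f (k + 1) 0 = f k 0 + l.get ⟨k, hN ▸ hk⟩ 0 := by
      rw [heq]; rfl
    rcases h0 with h | h | h
    · right; right; rw [this, h]; ring
    · left; rw [this, h]; ring
    · right; left; rw [this, h]
  -- mulVec is constant along the path
  have hmul : ∀ k, (intMat A).mulVec (f k) = (intMat A).mulVec (natToInt v) := by
    intro k
    induction k with
    | zero => rw [hf0]
    | succ k ih =>
      by_cases hk : k < N
      · have heq := hstep k hk
        have hm : l.get ⟨k, hN ▸ hk⟩ ∈ M := hlM _ (l.get_mem _)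
        have hk0 : (intMat A).mulVec (l.get ⟨k, hN ▸ hk⟩) = 0 := hker hm
        rw [heq, Matrix.mulVec_add, hk0, add_zero, ih]
      · have : l.take (k + 1) = l.take k := by
          rw [List.take_of_length_le (by omega), List.take_of_length_le (by omega)]
        simp only [hf] at ih ⊢
        rw [this]; exact ih
  -- find k with f k 0 = c
  have hfNc : f N 0 ≤ (c : ℤ) := by
    rw [hfN]
    simp only [natToInt, hu0]
    exact_mod_cast hac
  classical
  have hP : ∃ k, f k 0 ≤ (c : ℤ) := ⟨N, hfNc⟩
  set k := Nat.find hP with hkdef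
  clear_value k
  have hkc : f k 0 ≤ (c : ℤ) := hkdef ▸ Nat.find_spec hP
  have hkN : k ≤ N := hkdef ▸ Nat.find_min' hP hfNc
  have hkc' : f k 0 = (c : ℤ) := by
    rcases Nat.eq_zero_or_pos k with h0 | hpos
    · -- k = 0 : f 0 0 = b and b ≤ c ≤ b forces c = b
      have : f k 0 = (b : ℤ) := by
        rw [h0, hf0]; simp only [natToInt, hv0]
      rw [this] at hkc ⊢
      have : (c : ℤ) ≤ (b : ℤ) := by exact_mod_cast hcb
      omega
    · obtain ⟨m, rfl⟩ : ∃ m, k = m + 1 := ⟨k - 1, by omega⟩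
      have hm : ¬ f m 0 ≤ (c : ℤ) := Nat.find_min hP (by omega)
      have hmN : m < N := by omega
      rcases hstep0 m hmN with h | h | h <;> omega
  -- build the table at step k
  refine ⟨fun i => (f k i).toNat, ?_, ?_⟩
  · -- membership in tables
    have hcast : natToInt (fun i => (f k i).toNat) = f k := by
      funext i
      simp only [natToInt]
      exact Int.toNat_of_nonneg (hnonneg k hkN i)
    have hmv : (intMat A).mulVec (natToInt (fun i => (f k i).toNat)) =
        (intMat A).mulVec (natToInt v) := by rw [hcast]; exact hmul k
    have key : ∀ (w : Fin d → ℕ) (j : Fin r),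
        (intMat A).mulVec (natToInt w) j = ((A.mulVec w j : ℕ) : ℤ) := by
      intro w j
      simp [Matrix.mulVec, dotProduct, intMat, natToInt]
    have : A.mulVec (fun i => (f k i).toNat) = A.mulVec v := by
      funext j
      have := congrFun hmv j
      rw [key, key] at this
      exact_mod_cast this
    show A.mulVec (fun i => (f k i).toNat) = t
    rw [this, hv]
  · -- first coordinate is c
    have : ((f k 0).toNat : ℤ) = (c : ℤ) := by
      rw [Int.toNat_of_nonneg (hnonneg k hkN 0), hkc']
    exact_mod_cast this

end SIS
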